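/- For every natural number n ≥ 1, the coefficient of X^{2^n} in F n, viewed as a polynomial in the single variable X with coefficients in ℤ[k, b, Y], equals k^{2^n − 1}. Equivalently, the only exponent vector in the support of F n whose X-exponent equals 2^n is the monomial k^{2^n − 1}·X^{2^n}, and it occurs with coefficient 1. -/

import Mathlib

open MvPolynomial

/-- The pair `(Fₙ, Gₙ)` in `ℤ[k, b, X, Y]` (variables `0 ↦ k`, `1 ↦ b`, `2 ↦ X`, `3 ↦ Y`),
defined by `F 1 = k (X² + b Y²)`, `G 1 = X Y`,
`F (n+1) = k ((F n)² + b (G n)²)`, `G (n+1) = (F n) (G n)`. -/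
noncomputable def FG : ℕ → MvPolynomial (Fin 4) ℤ × MvPolynomial (Fin 4) ℤ
  | 0 => (0, 0)
  | 1 => (X 0 * (X 2 ^ 2 + X 1 * X 3 ^ 2), X 2 * X 3)
  | n + 2 =>
      (X 0 * ((FG (n + 1)).1 ^ 2 + X 1 * (FG (n + 1)).2 ^ 2),
        (FG (n + 1)).1 * (FG (n + 1)).2)

noncomputable def F (n : ℕ) : MvPolynomial (Fin 4) ℤ := (FG n).1
noncomputable def G (n : ℕ) : MvPolynomial (Fin 4) ℤ := (FG n).2

lemma F_succ (n : ℕ) (hn : 1 ≤ n) : F (n+1) = X 0 * (F n ^ 2 + X 1 * G n ^ 2) := by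
  obtain ⟨m, rfl⟩ := Nat.exists_eq_add_of_le' hn
  rfl

lemma G_succ (n : ℕ) (hn : 1 ≤ n) : G (n+1) = F n * G n := by
  obtain ⟨m, rfl⟩ := Nat.exists_eq_add_of_le' hn
  rfl

lemma F_one : F 1 = monomial (Finsupp.single 0 1 + Finsupp.single 2 2) 1
    + monomial (Finsupp.single 0 1 + Finsupp.single 1 1 + Finsupp.single 3 2) 1 := by
  show X 0 * (X 2 ^ 2 + X 1 * X 3 ^ 2) = _
  rw [mul_add]
  simp only [X, monomial_mul, monomial_pow, one_mul, mul_one, one_pow, Finsupp.smul_single]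
  rw [add_assoc]
  norm_num

lemma deg_FG (n : ℕ) (hn : 1 ≤ n) :
    degreeOf 2 (F n) ≤ 2 ^ n ∧ degreeOf 2 (G n) ≤ 2 ^ n - 1 := by
  induction n, hn using Nat.le_induction with
  | base =>
    constructor
    · show degreeOf 2 (X 0 * (X 2 ^ 2 + X 1 * X 3 ^ 2)) ≤ 2
      calc degreeOf 2 (X 0 * (X 2 ^ 2 + X 1 * X 3 ^ 2))
          ≤ degreeOf 2 (X 0 : MvPolynomial (Fin 4) ℤ)
            + degreeOf 2 (X 2 ^ 2 + X 1 * X 3 ^ 2 : MvPolynomial (Fin 4) ℤ) :=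
            degreeOf_mul_le _ _ _
        _ ≤ _ := by
            have h1 : degreeOf 2 (X 2 ^ 2 : MvPolynomial (Fin 4) ℤ) ≤ 2 := by
              rw [sq]
              refine (degreeOf_mul_le _ _ _).trans ?_
              simp [degreeOf_X]
            have h2 : degreeOf 2 (X 1 * X 3 ^ 2 : MvPolynomial (Fin 4) ℤ) ≤ 0 := by
              refine (degreeOf_mul_le _ _ _).trans ?_
              rw [sq]
              have := degreeOf_mul_le (R := ℤ) (σ := Fin 4) 2 (X 3) (X 3)
              simp_all [degreeOf_X]
            have h3 := degreeOf_add_le 2 (X 2 ^ 2 : MvPolynomial (Fin 4) ℤ) (X 1 * X 3 ^ 2)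
            simp [degreeOf_X]
            omega
    · show degreeOf 2 (X 2 * X 3) ≤ 1
      refine (degreeOf_mul_le _ _ _).trans ?_
      simp [degreeOf_X]
  | succ n hn ih =>
    obtain ⟨ihF, ihG⟩ := ih
    have h1 : (1:ℕ) ≤ 2 ^ n := Nat.one_le_two_pow
    constructor
    · rw [F_succ n hn]
      refine (degreeOf_mul_le _ _ _).trans ?_
      have hF2 : degreeOf 2 (F n ^ 2) ≤ 2 ^ n + 2 ^ n := by
        rw [sq]; exact (degreeOf_mul_le _ _ _).trans (add_le_add ihF ihF)
      have hG2 : degreeOf 2 (X 1 * G n ^ 2) ≤ 2 ^ n + 2 ^ n := by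
        refine (degreeOf_mul_le _ _ _).trans ?_
        rw [sq]
        have := (degreeOf_mul_le 2 (G n) (G n)).trans (add_le_add ihG ihG)
        simp [degreeOf_X]
        omega
      have h3 := degreeOf_add_le 2 (F n ^ 2) (X 1 * G n ^ 2)
      have h4 : degreeOf 2 (X 0 : MvPolynomial (Fin 4) ℤ) = 0 := by simp [degreeOf_X]
      rw [pow_succ 2 n]
      omega
    · rw [G_succ n hn]
      refine (degreeOf_mul_le _ _ _).trans ?_
      rw [pow_succ]
      omega

noncomputable def Mm (n : ℕ) : Fin 4 →₀ ℕ := Finsupp.single 0 (2 ^ n - 1) + Finsupp.single 2 (2 ^ n)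

lemma fin02 : (0 : Fin 4) ≠ 2 := by decide
lemma fin12 : (1 : Fin 4) ≠ 2 := by decide

lemma M_apply2 (n : ℕ) : (Mm n) 2 = 2 ^ n := by
  simp [Mm, Finsupp.single_apply, fin02]

lemma M_succ (n : ℕ) :
    Finsupp.single (0 : Fin 4) 1 + (Mm n + Mm n) = Mm (n+1) := by
  have h1 : (1:ℕ) ≤ 2 ^ n := Nat.one_le_two_pow
  ext i
  fin_cases i <;>
    simp [Mm, Finsupp.single_apply] <;> omega

lemma suppF_le (n : ℕ) (hn : 1 ≤ n) {m : Fin 4 →₀ ℕ} (hm : m ∈ (F n).support) :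
    m 2 ≤ 2 ^ n := (monomial_le_degreeOf 2 hm).trans (deg_FG n hn).1

lemma suppG_le (n : ℕ) (hn : 1 ≤ n) {m : Fin 4 →₀ ℕ} (hm : m ∈ (G n).support) :
    m 2 ≤ 2 ^ n - 1 := (monomial_le_degreeOf 2 hm).trans (deg_FG n hn).2

lemma not_mem_bad (n : ℕ) (hn : 1 ≤ n) {m : Fin 4 →₀ ℕ}
    (hm : m ∈ (X 0 * (X 1 * G n ^ 2) : MvPolynomial (Fin 4) ℤ).support) :
    m 2 < 2 ^ (n + 1) := by
  have h1 : (1:ℕ) ≤ 2 ^ n := Nat.one_le_two_pow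
  have := support_mul _ _ hm
  rw [Finset.mem_add] at this
  obtain ⟨a, ha, bc, hbc, rfl⟩ := this
  rw [support_X] at ha
  have := support_mul _ _ hbc
  rw [Finset.mem_add] at this
  obtain ⟨b, hb, c, hc, rfl⟩ := this
  rw [support_X] at hb
  rw [sq] at hc
  have := support_mul _ _ hc
  rw [Finset.mem_add] at this
  obtain ⟨d, hd, e, he, rfl⟩ := this
  have hd2 := suppG_le n hn hd
  have he2 := suppG_le n hn he
  simp only [Finset.mem_singleton] at ha hb
  subst ha; subst hb
  simp only [Finsupp.add_apply, Finsupp.single_apply, if_neg fin02, if_neg fin12]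
  rw [pow_succ]
  omega

/-- The coefficient of `X^(2^n)` in `F n`: the unique exponent vector in the support of
`F n` with `X`-exponent `2^n` is that of `k^(2^n - 1) * X^(2^n)`, with coefficient `1`. -/
theorem coeff_X_pow_F (n : ℕ) (hn : 1 ≤ n) :
    (∀ m ∈ (F n).support, m 2 = 2 ^ n →
        m = Finsupp.single (0 : Fin 4) (2 ^ n - 1) + Finsupp.single 2 (2 ^ n)) ∧
    coeff (Finsupp.single (0 : Fin 4) (2 ^ n - 1) + Finsupp.single 2 (2 ^ n)) (F n) = 1 := by
  induction n, hn using Nat.le_induction with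
  | base =>
    rw [F_one]
    have hne : (Finsupp.single (0:Fin 4) 1 + Finsupp.single 1 1 + Finsupp.single 3 2)
        ≠ Finsupp.single (0:Fin 4) 1 + Finsupp.single 2 2 := by
      intro h
      have := DFunLike.congr_fun h 1
      simp [Finsupp.single_apply] at this
    constructor
    · intro m hm hm2
      have := support_add hm
      rw [Finset.mem_union] at this
      rcases this with h | h <;>
        simp only [support_monomial, if_neg one_ne_zero, Finset.mem_singleton] at h <;> subst h
      · norm_num
      · simp [Finsupp.single_apply] at hm2
    · rw [show (2:ℕ)^1 - 1 = 1 from rfl, show (2:ℕ)^1 = 2 from rfl, coeff_add,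
        coeff_monomial, coeff_monomial, if_pos rfl, if_neg hne, add_zero]
  | succ n hn ih =>
    obtain ⟨ihU, ihC⟩ := ih
    rw [show (Finsupp.single (0 : Fin 4) (2 ^ n - 1) + Finsupp.single 2 (2 ^ n)) = Mm n from rfl]
      at ihU ihC
    rw [show (Finsupp.single (0 : Fin 4) (2 ^ (n+1) - 1) + Finsupp.single 2 (2 ^ (n+1)))
      = Mm (n+1) from rfl]
    have key : ∀ m ∈ (F (n+1)).support, m 2 = 2 ^ (n+1) → m = Mm (n+1) := by
      intro m hm hm2
      rw [F_succ n hn, mul_add] at hm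
      have := support_add hm
      rw [Finset.mem_union] at this
      rcases this with h | h
      · have := support_mul _ _ h
        rw [Finset.mem_add] at this
        obtain ⟨a, ha, bc, hbc, rfl⟩ := this
        rw [support_X, Finset.mem_singleton] at ha
        subst ha
        rw [sq] at hbc
        have := support_mul _ _ hbc
        rw [Finset.mem_add] at this
        obtain ⟨b, hb, c, hc, rfl⟩ := this
        have hb2 := suppF_le n hn hb
        have hc2 := suppF_le n hn hc
        have hsum : b 2 + c 2 = 2 ^ n + 2 ^ n := by
          simp only [Finsupp.add_apply, Finsupp.single_apply, if_neg fin02, pow_succ] at hm2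
          omega
        have hbe : b 2 = 2 ^ n := by omega
        have hce : c 2 = 2 ^ n := by omega
        rw [ihU b hb hbe, ihU c hc hce, M_succ]
      · exact absurd hm2 (Nat.ne_of_lt (not_mem_bad n hn h))
    refine ⟨key, ?_⟩
    rw [F_succ n hn, mul_add, coeff_add]
    have hbad : coeff (Mm (n+1)) (X 0 * (X 1 * G n ^ 2) : MvPolynomial (Fin 4) ℤ) = 0 := by
      by_contra h
      have h' := mem_support_iff.mpr h
      exact absurd (M_apply2 (n+1)) (Nat.ne_of_lt (not_mem_bad n hn h'))
    rw [hbad, add_zero, ← M_succ, coeff_X_mul, sq, coeff_mul]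
    rw [Finset.sum_eq_single ((Mm n), (Mm n))]
    · rw [ihC]; norm_num
    · rintro ⟨a, b⟩ hab hne
      rw [Finset.HasAntidiagonal.mem_antidiagonal] at hab
      by_contra h
      have ha : a ∈ (F n).support := by
        rw [mem_support_iff]; intro h0; apply h; simp [h0]
      have hb : b ∈ (F n).support := by
        rw [mem_support_iff]; intro h0; apply h; simp [h0]
      have hab2 : a 2 + b 2 = 2 ^ n + 2 ^ n := by
        have h2 := DFunLike.congr_fun hab 2
        simp only [Finsupp.add_apply, M_apply2] at h2
        omega
      have ha2 := suppF_le n hn ha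
      have hb2 := suppF_le n hn hb
      have hA := ihU a ha (by omega)
      have hB := ihU b hb (by omega)
      exact hne (by rw [Prod.mk.injEq]; exact ⟨hA, hB⟩)
    · intro h
      exact absurd (Finset.HasAntidiagonal.mem_antidiagonal.mpr (by ring)) h
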